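/- Assume σ0 is an acyclic orientation of Γ such that for every edge e there is no σ0-directed path of length at least 2 from t_{σ0}(e) to h_{σ0}(e) (i.e. (Γ, σ0) is the Hasse diagram of a signed poset of type A). Then for every x ∈ ℝ^E the following are equivalent: (i) there exists y ∈ ℝ^V such that x − A_{σ0}^T y ∈ [0,1)^E; (ii) for every cycle C of Γ and every choice of traversal direction, −#C^↓ < Σ_{e∈C^↑} x(e) − Σ_{e∈C^↓} x(e) < #C^↑. (This is the description of the conic region W(B) for toric rings of balanced signed posets, generalizing the known description for Hibi rings.) -/

import Mathlib

set_option linter.unusedSectionVars false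
set_option linter.unusedVariables false
set_option maxHeartbeats 1000000


open Matrix

/-- An orientation of a simple graph: each edge is assigned a head and a tail which
are its two endpoints. -/
structure Orient {V : Type*} (Γ : SimpleGraph V) where
  head : Γ.edgeSet → V
  tail : Γ.edgeSet → V
  consistent : ∀ e : Γ.edgeSet, s(tail e, head e) = (e : Sym2 V)

/-- The (signed) incidence matrix of an orientation: `+1` at the head, `-1` at the
tail, `0` elsewhere. -/
def incMat {V : Type*} [DecidableEq V] {Γ : SimpleGraph V} (σ : Orient Γ) :
    Matrix V Γ.edgeSet ℤ :=
  Matrix.of fun v e => if v = σ.head e then 1 else if v = σ.tail e then -1 else 0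

/-- One directed step along an edge. -/
def dstep {V : Type*} {Γ : SimpleGraph V} (σ : Orient Γ) (u v : V) : Prop :=
  ∃ e, σ.tail e = u ∧ σ.head e = v

/-- An orientation is acyclic if it has no directed cycle. -/
def OAcyclic {V : Type*} {Γ : SimpleGraph V} (σ : Orient Γ) : Prop :=
  ∀ v, ¬ Relation.TransGen (dstep σ) v v

/-- `v` is the unique source: it is the only vertex that is not the head of any edge. -/
def UniqueSource {V : Type*} {Γ : SimpleGraph V} (σ : Orient Γ) (v : V) : Prop :=
  (∀ e, σ.head e ≠ v) ∧ ∀ w, (∀ e, σ.head e ≠ w) → w = v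

namespace ConicAux

open Finset

variable {V : Type*} [DecidableEq V] {Γ : SimpleGraph V}

lemma edge_ne {e : Γ.edgeSet} {u v : V} (h : (e : Sym2 V) = s(u, v)) : u ≠ v := by
  rintro rfl
  have he : (e : Sym2 V) ∈ Γ.edgeSet := e.2
  rw [h, SimpleGraph.mem_edgeSet] at he
  exact Γ.irrefl he

lemma head_or (σ0 : Orient Γ) {e : Γ.edgeSet} {u v : V} (h : (e : Sym2 V) = s(u, v)) :
    (σ0.head e = v ∧ σ0.tail e = u) ∨ (σ0.head e = u ∧ σ0.tail e = v) := by
  have hc := σ0.consistent e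
  rw [h, Sym2.eq_iff] at hc
  tauto

lemma head_ne_tail (σ0 : Orient Γ) (e : Γ.edgeSet) : σ0.head e ≠ σ0.tail e := by
  have h2 := edge_ne (u := σ0.tail e) (v := σ0.head e) (σ0.consistent e).symm
  exact fun h => h2 h.symm

lemma sum_inc [Fintype V] (σ0 : Orient Γ) (e : Γ.edgeSet) (y : V → ℝ) :
    ∑ v, (incMat σ0 v e : ℝ) * y v = y (σ0.head e) - y (σ0.tail e) := by
  have hne : σ0.head e ≠ σ0.tail e := head_ne_tail σ0 e
  have : ∀ v, (incMat σ0 v e : ℝ) * y v =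
      (if v = σ0.head e then y v else 0) + (if v = σ0.tail e then -y v else 0) := by
    intro v
    by_cases h1 : v = σ0.head e <;> by_cases h2 : v = σ0.tail e <;>
      simp [incMat, h1, h2, hne, hne.symm, Ne.symm hne]
  rw [Finset.sum_congr rfl (fun v _ => this v), Finset.sum_add_distrib]
  simp [sub_eq_add_neg]

/-- walks in the "constraint digraph": each step uses an edge of `Γ` in either direction. -/
def IsWalk (Γ : SimpleGraph V) (m : ℕ) (p : ℕ → V) (c : ℕ → Γ.edgeSet) : Prop :=
  ∀ s < m, (c s : Sym2 V) = s(p s, p (s + 1))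

/-- weight of step `s`: `x e` if traversed forward, `1 - x e - ε` if backward. -/
noncomputable def wt (σ0 : Orient Γ) (x : Γ.edgeSet → ℝ) (ε : ℝ)
    (p : ℕ → V) (c : ℕ → Γ.edgeSet) (s : ℕ) : ℝ :=
  if σ0.head (c s) = p (s + 1) then x (c s) else 1 - x (c s) - ε

def kcard (σ0 : Orient Γ) (m : ℕ) (i : ℕ → V) (c : ℕ → Γ.edgeSet) : ℕ :=
  ((Finset.range m).filter (fun s => σ0.head (c s) = i s)).card

noncomputable def sdiff (σ0 : Orient Γ) (x : Γ.edgeSet → ℝ) (m : ℕ) (i : ℕ → V)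
    (c : ℕ → Γ.edgeSet) : ℝ :=
  (∑ s ∈ (Finset.range m).filter (fun s => σ0.head (c s) = i ((s + 1) % m)), x (c s)) -
    ∑ s ∈ (Finset.range m).filter (fun s => σ0.head (c s) = i s), x (c s)

def Valid (σ0 : Orient Γ) (m : ℕ) (i : ℕ → V) (c : ℕ → Γ.edgeSet) : Prop :=
  3 ≤ m ∧ (∀ s s', s < m → s' < m → i s = i s' → s = s') ∧
    (∀ s < m, (c s : Sym2 V) = s(i s, i ((s + 1) % m))) ∧ 1 ≤ kcard σ0 m i c

noncomputable def ratio (σ0 : Orient Γ) (x : Γ.edgeSet → ℝ) (m : ℕ) (i : ℕ → V)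
    (c : ℕ → Γ.edgeSet) : ℝ :=
  (sdiff σ0 x m i c + (kcard σ0 m i c : ℝ)) / (kcard σ0 m i c : ℝ)

/-- the cycle inequalities (RHS of the theorem). -/
def CycIneq (σ0 : Orient Γ) (x : Γ.edgeSet → ℝ) : Prop :=
  ∀ (ℓ : ℕ) (i : ℕ → V) (c : ℕ → Γ.edgeSet), 3 ≤ ℓ →
    (∀ s s', s < ℓ → s' < ℓ → i s = i s' → s = s') →
    (∀ s < ℓ, (c s : Sym2 V) = s(i s, i ((s + 1) % ℓ))) →
    (-((((Finset.range ℓ).filter fun s => σ0.head (c s) = i s).card : ℝ)) <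
        (∑ s ∈ (Finset.range ℓ).filter (fun s => σ0.head (c s) = i ((s + 1) % ℓ)),
          x (c s)) -
        (∑ s ∈ (Finset.range ℓ).filter (fun s => σ0.head (c s) = i s), x (c s)) ∧
      (∑ s ∈ (Finset.range ℓ).filter (fun s => σ0.head (c s) = i ((s + 1) % ℓ)),
          x (c s)) -
        (∑ s ∈ (Finset.range ℓ).filter (fun s => σ0.head (c s) = i s), x (c s)) <
        (((Finset.range ℓ).filter fun s => σ0.head (c s) = i ((s + 1) % ℓ)).card : ℝ))

lemma pmod {m : ℕ} {p : ℕ → V} (hc : p m = p 0) {s : ℕ} (hs : s < m) :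
    p ((s + 1) % m) = p (s + 1) := by
  rcases lt_or_eq_of_le (Nat.succ_le_of_lt hs) with h | h
  · rw [Nat.mod_eq_of_lt h]
  · have hm : (s + 1) % m = 0 := by rw [← h]; exact Nat.mod_self _
    rw [hm, ← hc]
    exact congrArg p (by omega)

lemma sum_wt_closed (σ0 : Orient Γ) (x : Γ.edgeSet → ℝ) (ε : ℝ) {m : ℕ} {p : ℕ → V}
    {c : ℕ → Γ.edgeSet} (hw : IsWalk Γ m p c) (hc : p m = p 0) :
    ∑ s ∈ range m, wt σ0 x ε p c s
      = sdiff σ0 x m p c + (kcard σ0 m p c : ℝ) * (1 - ε) := by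
  have hAB : ∀ s ∈ range m,
      ((¬ σ0.head (c s) = p s) ↔ σ0.head (c s) = p ((s + 1) % m)) := by
    intro s hs
    rw [mem_range] at hs
    rw [pmod hc hs]
    have hne := edge_ne (hw s hs)
    constructor
    · intro hB
      rcases head_or σ0 (hw s hs) with ⟨h1, _⟩ | ⟨h1, _⟩
      · exact h1
      · exact absurd h1 hB
    · intro hA hB
      exact hne (hB.symm.trans hA)
  rw [← Finset.sum_filter_add_sum_filter_not (range m)
    (fun s => σ0.head (c s) = p s) (wt σ0 x ε p c)]
  have h1 : ∑ s ∈ (range m).filter (fun s => σ0.head (c s) = p s), wt σ0 x ε p c s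
      = (kcard σ0 m p c : ℝ) * (1 - ε)
        - ∑ s ∈ (range m).filter (fun s => σ0.head (c s) = p s), x (c s) := by
    have : ∀ s ∈ (range m).filter (fun s => σ0.head (c s) = p s),
        wt σ0 x ε p c s = (1 - ε) - x (c s) := by
      intro s hs
      rw [mem_filter, mem_range] at hs
      have hne := edge_ne (hw s hs.1)
      have : ¬ σ0.head (c s) = p (s + 1) := by
        intro h
        exact hne (hs.2.symm.trans h)
      rw [wt, if_neg this]; ring
    rw [Finset.sum_congr rfl this, Finset.sum_sub_distrib, Finset.sum_const,
      nsmul_eq_mul]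
    rfl
  have h2 : ∑ s ∈ (range m).filter (fun s => ¬ σ0.head (c s) = p s), wt σ0 x ε p c s
      = ∑ s ∈ (range m).filter (fun s => σ0.head (c s) = p ((s + 1) % m)), x (c s) := by
    rw [Finset.filter_congr hAB]
    apply Finset.sum_congr rfl
    intro s hs
    rw [mem_filter, mem_range] at hs
    rw [wt, if_pos (by rw [← pmod hc hs.1]; exact hs.2)]
  rw [h1, h2, sdiff]
  ring

lemma kcard_congr (σ0 : Orient Γ) {m : ℕ} {i i' : ℕ → V} {c c' : ℕ → Γ.edgeSet}
    (hi : ∀ s < m, i s = i' s) (hc : ∀ s < m, c s = c' s) :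
    kcard σ0 m i c = kcard σ0 m i' c' := by
  unfold kcard
  congr 1
  apply Finset.filter_congr
  intro s hs
  rw [mem_range] at hs
  rw [hi s hs, hc s hs]

lemma sdiff_congr (σ0 : Orient Γ) (x : Γ.edgeSet → ℝ) {m : ℕ} (hm : 0 < m)
    {i i' : ℕ → V} {c c' : ℕ → Γ.edgeSet}
    (hi : ∀ s < m, i s = i' s) (hc : ∀ s < m, c s = c' s) :
    sdiff σ0 x m i c = sdiff σ0 x m i' c' := by
  unfold sdiff
  have hf1 : (Finset.range m).filter (fun s => σ0.head (c s) = i ((s + 1) % m))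
      = (Finset.range m).filter (fun s => σ0.head (c' s) = i' ((s + 1) % m)) := by
    apply Finset.filter_congr
    intro s hs
    rw [mem_range] at hs
    rw [hi ((s + 1) % m) (Nat.mod_lt _ hm), hc s hs]
  have hf2 : (Finset.range m).filter (fun s => σ0.head (c s) = i s)
      = (Finset.range m).filter (fun s => σ0.head (c' s) = i' s) := by
    apply Finset.filter_congr
    intro s hs
    rw [mem_range] at hs
    rw [hi s hs, hc s hs]
  rw [hf1, hf2]
  congr 1
  · apply Finset.sum_congr rfl
    intro s hs
    rw [mem_filter, mem_range] at hs
    rw [hc s hs.1]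
  · apply Finset.sum_congr rfl
    intro s hs
    rw [mem_filter, mem_range] at hs
    rw [hc s hs.1]

lemma valid_congr (σ0 : Orient Γ) {m : ℕ} {i i' : ℕ → V} {c c' : ℕ → Γ.edgeSet}
    (hi : ∀ s < m, i s = i' s) (hc : ∀ s < m, c s = c' s)
    (h : Valid σ0 m i c) : Valid σ0 m i' c' := by
  obtain ⟨h3, hj, he, hk⟩ := h
  have hm : 0 < m := by omega
  refine ⟨h3, ?_, ?_, ?_⟩
  · intro s s' hs hs' heq
    exact hj s s' hs hs' (by rw [hi s hs, hi s' hs', heq])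
  · intro s hs
    rw [← hc s hs, ← hi s hs, ← hi ((s + 1) % m) (Nat.mod_lt _ hm)]
    exact he s hs
  · rw [← kcard_congr σ0 hi hc]; exact hk

lemma ratio_congr (σ0 : Orient Γ) (x : Γ.edgeSet → ℝ) {m : ℕ} (hm : 0 < m)
    {i i' : ℕ → V} {c c' : ℕ → Γ.edgeSet}
    (hi : ∀ s < m, i s = i' s) (hc : ∀ s < m, c s = c' s) :
    ratio σ0 x m i c = ratio σ0 x m i' c' := by
  unfold ratio
  rw [kcard_congr σ0 hi hc, sdiff_congr σ0 x hm hi hc]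

lemma cyc_pos (σ0 : Orient Γ) (x : Γ.edgeSet → ℝ) (hcyc : CycIneq σ0 x)
    {m : ℕ} {i : ℕ → V} {c : ℕ → Γ.edgeSet}
    (h3 : 3 ≤ m) (hj : ∀ s s', s < m → s' < m → i s = i s' → s = s')
    (he : ∀ s < m, (c s : Sym2 V) = s(i s, i ((s + 1) % m))) :
    0 < sdiff σ0 x m i c + (kcard σ0 m i c : ℝ) := by
  have h := (hcyc m i c h3 hj he).1
  unfold sdiff kcard
  linarith

lemma ratio_pos (σ0 : Orient Γ) (x : Γ.edgeSet → ℝ) (hcyc : CycIneq σ0 x)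
    {m : ℕ} {i : ℕ → V} {c : ℕ → Γ.edgeSet} (h : Valid σ0 m i c) :
    0 < ratio σ0 x m i c := by
  obtain ⟨h3, hj, he, hk⟩ := h
  have hkpos : (0 : ℝ) < (kcard σ0 m i c : ℝ) := by
    exact_mod_cast Nat.lt_of_lt_of_le Nat.zero_lt_one hk
  exact div_pos (cyc_pos σ0 x hcyc h3 hj he) hkpos

/-- decode a finitely-supported tuple into a function -/
def dec {α : Type*} (N : ℕ) (P : Fin (N + 1) → α) : ℕ → α :=
  fun s => P ⟨min s N, Nat.lt_succ_of_le (min_le_right _ _)⟩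

lemma dec_eq {α : Type*} (N : ℕ) (p : ℕ → α) {s : ℕ} (hs : s ≤ N) :
    dec N (fun j => p (j : ℕ)) s = p s := by
  show p (min s N) = p s
  rw [min_eq_left hs]

open Classical in
noncomputable def G [Fintype V] (σ0 : Orient Γ) (x : Γ.edgeSet → ℝ)
    (t : Fin (Fintype.card V + 1) × (Fin (Fintype.card V + 1) → V) ×
      (Fin (Fintype.card V + 1) → Γ.edgeSet)) : ℝ :=
  if Valid σ0 (t.1 : ℕ) (dec _ t.2.1) (dec _ t.2.2)
  then ratio σ0 x (t.1 : ℕ) (dec _ t.2.1) (dec _ t.2.2) else 1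

lemma G_pos [Fintype V] (σ0 : Orient Γ) (x : Γ.edgeSet → ℝ) (hcyc : CycIneq σ0 x)
    (t : Fin (Fintype.card V + 1) × (Fin (Fintype.card V + 1) → V) ×
      (Fin (Fintype.card V + 1) → Γ.edgeSet)) : 0 < G σ0 x t := by
  unfold G
  split_ifs with h
  · exact ratio_pos σ0 x hcyc h
  · exact one_pos

lemma G_encode [Fintype V] (σ0 : Orient Γ) (x : Γ.edgeSet → ℝ) {m : ℕ} {p : ℕ → V}
    {c : ℕ → Γ.edgeSet} (hm : m < Fintype.card V + 1) (hv : Valid σ0 m p c) :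
    G σ0 x ⟨⟨m, hm⟩, fun j => p (j : ℕ), fun j => c (j : ℕ)⟩ = ratio σ0 x m p c := by
  have hm0 : 0 < m := by
    obtain ⟨h3, _, _, _⟩ := hv; omega
  have hi : ∀ s < m, dec (Fintype.card V) (fun j => p (j : ℕ)) s = p s :=
    fun s hs => dec_eq _ _ (by omega)
  have hcc : ∀ s < m, dec (Fintype.card V) (fun j => c (j : ℕ)) s = c s :=
    fun s hs => dec_eq _ _ (by omega)
  have hv' : Valid σ0 m (dec (Fintype.card V) (fun j => p (j : ℕ)))
      (dec (Fintype.card V) (fun j => c (j : ℕ))) :=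
    valid_congr σ0 (fun s hs => (hi s hs).symm) (fun s hs => (hcc s hs).symm) hv
  simp only [G, Fin.val_mk]
  rw [if_pos hv']
  exact ratio_congr σ0 x hm0 hi hcc


lemma splice (σ0 : Orient Γ) (x : Γ.edgeSet → ℝ) (ε : ℝ) {m a b : ℕ} {p : ℕ → V}
    {c : ℕ → Γ.edgeSet} (hw : IsWalk Γ m p c) (hab : a < b) (hbm : b ≤ m)
    (hpab : p a = p b) :
    ∃ p1 c1 p2 c2, IsWalk Γ (b - a) p1 c1 ∧ p1 (b - a) = p1 0 ∧
      IsWalk Γ (m - (b - a)) p2 c2 ∧ p2 (m - (b - a)) = p m ∧ p2 0 = p 0 ∧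
      ∑ s ∈ Finset.range m, wt σ0 x ε p c s
        = (∑ s ∈ Finset.range (m - (b - a)), wt σ0 x ε p2 c2 s)
          + ∑ s ∈ Finset.range (b - a), wt σ0 x ε p1 c1 s := by
  set p1 : ℕ → V := fun s => p (a + s) with hp1
  set c1 : ℕ → Γ.edgeSet := fun s => c (a + s) with hc1
  set p2 : ℕ → V := fun s => if s ≤ a then p s else p (s + (b - a)) with hp2
  set c2 : ℕ → Γ.edgeSet := fun s => if s < a then c s else c (s + (b - a)) with hc2
  refine ⟨p1, c1, p2, c2, ?_, ?_, ?_, ?_, ?_, ?_⟩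
  · intro s hs
    simp only [hp1, hc1]
    have h1 : a + (s + 1) = (a + s) + 1 := by omega
    rw [h1]
    exact hw (a + s) (by omega)
  · simp only [hp1]
    have h1 : a + (b - a) = b := by omega
    rw [h1, Nat.add_zero, hpab]
  · intro s hs
    simp only [hp2, hc2]
    rcases lt_trichotomy s a with h | h | h
    · rw [if_pos h, if_pos (le_of_lt h), if_pos (by omega : s + 1 ≤ a)]
      exact hw s (by omega)
    · have hblt : b < m := by omega
      rw [if_neg (by omega : ¬ s < a), if_pos (by omega : s ≤ a),
        if_neg (by omega : ¬ s + 1 ≤ a)]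
      have e1 : s + (b - a) = b := by omega
      have e2 : s + 1 + (b - a) = b + 1 := by omega
      rw [e1, e2, h, hpab]
      exact hw b hblt
    · rw [if_neg (by omega : ¬ s < a), if_neg (by omega : ¬ s ≤ a),
        if_neg (by omega : ¬ s + 1 ≤ a)]
      have e1 : s + (b - a) + 1 = s + 1 + (b - a) := by omega
      rw [← e1]
      exact hw (s + (b - a)) (by omega)
  · simp only [hp2]
    by_cases h : m - (b - a) ≤ a
    · have h1 : m = b := by omega
      rw [if_pos h]
      have h2 : m - (b - a) = a := by omega
      rw [h2, hpab, h1]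
    · rw [if_neg h]
      exact congrArg p (by omega)
  · simp only [hp2]
    rw [if_pos (Nat.zero_le a)]
  · have e1 : ∑ s ∈ Finset.range (b - a), wt σ0 x ε p1 c1 s
        = ∑ s ∈ Finset.Ico a b, wt σ0 x ε p c s := by
      rw [Finset.sum_Ico_eq_sum_range]
      apply Finset.sum_congr rfl
      intro s _
      have h1 : a + (s + 1) = a + s + 1 := by omega
      simp only [wt, hp1, hc1, h1]
    have e2 : ∑ s ∈ Finset.range (m - (b - a)), wt σ0 x ε p2 c2 s
        = (∑ s ∈ Finset.range a, wt σ0 x ε p c s)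
          + ∑ s ∈ Finset.Ico b m, wt σ0 x ε p c s := by
      have haux : a ≤ m - (b - a) := by omega
      rw [Finset.range_eq_Ico, ← Finset.sum_Ico_consecutive _ (Nat.zero_le a) haux]
      congr 1
      · rw [← Finset.range_eq_Ico]
        apply Finset.sum_congr rfl
        intro s hs
        rw [Finset.mem_range] at hs
        simp only [wt, hp2, hc2]
        rw [if_pos hs, if_pos (by omega : s + 1 ≤ a)]
      · rw [Finset.sum_Ico_eq_sum_range, Finset.sum_Ico_eq_sum_range]
        have hmm : m - (b - a) - a = m - b := by omega
        rw [hmm]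
        apply Finset.sum_congr rfl
        intro j hj
        rw [Finset.mem_range] at hj
        simp only [wt, hp2, hc2]
        rw [if_neg (by omega : ¬ a + j < a), if_neg (by omega : ¬ a + j + 1 ≤ a)]
        have h3 : a + j + (b - a) = b + j := by omega
        have h4 : a + j + 1 + (b - a) = b + j + 1 := by omega
        rw [h3, h4]
    rw [e1, e2, Finset.range_eq_Ico,
      ← Finset.sum_Ico_consecutive (wt σ0 x ε p c) (Nat.zero_le a) (by omega : a ≤ m),
      ← Finset.sum_Ico_consecutive (wt σ0 x ε p c) (le_of_lt hab) hbm]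
    rw [← Finset.range_eq_Ico]
    ring



lemma exists_eps [Fintype V] (σ0 : Orient Γ) (x : Γ.edgeSet → ℝ) (hcyc : CycIneq σ0 x) :
    ∃ ε : ℝ, 0 < ε ∧ ε < 1 ∧
      ∀ m p c, IsWalk Γ m p c → p m = p 0 →
        0 ≤ ∑ s ∈ Finset.range m, wt σ0 x ε p c s := by
  classical
  set S : Set ℝ := insert (2⁻¹ : ℝ) (Set.range (G σ0 x)) with hS
  have hSfin : S.Finite := (Set.finite_range _).insert _
  have hSne : S.Nonempty := ⟨2⁻¹, Set.mem_insert _ _⟩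
  set ε := sInf S with hεdef
  have hεmem : ε ∈ S := hSne.csInf_mem hSfin
  have hpos : ∀ w ∈ S, 0 < w := by
    intro w hw
    rcases Set.mem_insert_iff.mp hw with rfl | ⟨t, rfl⟩
    · norm_num
    · exact G_pos σ0 x hcyc t
  have hε0 : 0 < ε := hpos _ hεmem
  have hεhalf : ε ≤ 2⁻¹ := csInf_le hSfin.bddBelow (Set.mem_insert _ _)
  have hε1 : ε < 1 := lt_of_le_of_lt hεhalf (by norm_num)
  refine ⟨ε, hε0, hε1, ?_⟩
  intro m
  induction m using Nat.strong_induction_on with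
  | _ m IH =>
  intro p c hw hc
  rcases Nat.eq_zero_or_pos m with rfl | hm0
  · simp
  by_cases hinj : ∀ s s', s < m → s' < m → p s = p s' → s = s'
  · -- the walk is a simple cycle (or short)
    have hmN : m ≤ Fintype.card V := by
      have hf : Function.Injective (fun j : Fin m => p (j : ℕ)) := by
        intro a' b' hab
        exact Fin.ext (hinj _ _ a'.2 b'.2 hab)
      simpa using Fintype.card_le_of_injective _ hf
    rcases Nat.lt_or_ge m 3 with hm3 | hm3
    · -- m = 1 or 2
      interval_cases m
      · -- m = 1 : impossible, a self-loop
        exact absurd (hc ▸ edge_ne (hw 0 (by omega))) (by simp)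
      · -- m = 2 : forward + backward, weight 1 - ε
        have hw0 := hw 0 (by omega)
        have hw1 := hw 1 (by omega)
        have hne01 : p 0 ≠ p 1 := edge_ne hw0
        have hc01 : c 1 = c 0 := by
          apply Subtype.ext
          rw [hw1, hw0, hc]
          exact Sym2.eq_swap
        rw [Finset.sum_range_succ, Finset.sum_range_one]
        rcases head_or σ0 hw0 with ⟨h1, _⟩ | ⟨h1, _⟩
        · have hv0 : wt σ0 x ε p c 0 = x (c 0) := by
            rw [wt, if_pos h1]
          have hv1 : wt σ0 x ε p c 1 = 1 - x (c 0) - ε := by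
            rw [wt, if_neg, hc01]
            rw [hc01, h1, hc]
            exact fun h => hne01 h.symm
          rw [hv0, hv1]; linarith
        · have hv0 : wt σ0 x ε p c 0 = 1 - x (c 0) - ε := by
            rw [wt, if_neg]
            rw [h1]
            exact hne01
          have hv1 : wt σ0 x ε p c 1 = x (c 0) := by
            rw [wt, if_pos, hc01]
            rw [hc01, h1, hc]
          rw [hv0, hv1]; linarith
    · -- m ≥ 3 : a genuine cycle, use the cycle inequalities
      have hedge : ∀ s < m, (c s : Sym2 V) = s(p s, p ((s + 1) % m)) := by
        intro s hs
        rw [pmod hc hs]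
        exact hw s hs
      rw [sum_wt_closed σ0 x ε hw hc]
      rcases Nat.eq_zero_or_pos (kcard σ0 m p c) with hk | hk
      · have := cyc_pos σ0 x hcyc hm3 hinj hedge
        rw [hk] at this ⊢
        push_cast at this ⊢
        linarith
      · have hv : Valid σ0 m p c := ⟨hm3, hinj, hedge, hk⟩
        have hGt : G σ0 x ⟨⟨m, Nat.lt_succ_of_le hmN⟩, fun j => p (j : ℕ),
            fun j => c (j : ℕ)⟩ = ratio σ0 x m p c := G_encode σ0 x _ hv
        have hεle : ε ≤ ratio σ0 x m p c := by
          rw [← hGt]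
          exact csInf_le hSfin.bddBelow (Set.mem_insert_iff.mpr (Or.inr ⟨_, rfl⟩))
        have hkpos : (0 : ℝ) < (kcard σ0 m p c : ℝ) := by exact_mod_cast hk
        rw [ratio, le_div_iff₀ hkpos] at hεle
        nlinarith [hεle]
  · -- not injective : splice out a closed subwalk and use induction
    push_neg at hinj
    obtain ⟨a0, b0, ha0, hb0, hpeq, hne⟩ := hinj
    obtain ⟨a, b, hab, hbm, hpab⟩ : ∃ a b, a < b ∧ b < m ∧ p a = p b := by
      rcases Nat.lt_or_ge a0 b0 with h | h
      · exact ⟨a0, b0, h, hb0, hpeq⟩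
      · exact ⟨b0, a0, lt_of_le_of_ne h (Ne.symm hne), ha0, hpeq.symm⟩
    obtain ⟨p1, c1, p2, c2, hw1, hc1, hw2, h2m, h20, hsum⟩ :=
      splice σ0 x ε hw hab (le_of_lt hbm) hpab
    rw [hsum]
    have t1 := IH (b - a) (by omega) p1 c1 hw1 hc1
    have t2 := IH (m - (b - a)) (by omega) p2 c2 hw2 (h2m.trans (hc.trans h20.symm))
    linarith

lemma shorten [Fintype V] (σ0 : Orient Γ) (x : Γ.edgeSet → ℝ) (ε : ℝ)
    (hnn : ∀ m p c, IsWalk Γ m p c → p m = p 0 →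
      0 ≤ ∑ s ∈ Finset.range m, wt σ0 x ε p c s) :
    ∀ m p c, IsWalk Γ m p c → ∃ m' p' c', m' < Fintype.card V ∧ IsWalk Γ m' p' c' ∧
      p' 0 = p 0 ∧ p' m' = p m ∧
      ∑ s ∈ Finset.range m', wt σ0 x ε p' c' s ≤ ∑ s ∈ Finset.range m, wt σ0 x ε p c s := by
  intro m
  induction m using Nat.strong_induction_on with
  | _ m IH =>
  intro p c hw
  by_cases hm : m < Fintype.card V
  · exact ⟨m, p, c, hm, hw, rfl, rfl, le_refl _⟩
  · have hnotinj : ¬ Function.Injective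
        (fun j : Fin (Fintype.card V + 1) => p (j : ℕ)) := by
      intro hinj
      have := Fintype.card_le_of_injective _ hinj
      simp at this
    rw [Function.not_injective_iff] at hnotinj
    obtain ⟨A, B, hfeq, hne⟩ := hnotinj
    obtain ⟨a, b, hab, hbm, hpab⟩ : ∃ a b, a < b ∧ b ≤ m ∧ p a = p b := by
      rcases Nat.lt_or_ge (A : ℕ) (B : ℕ) with h | h
      · exact ⟨A, B, h, by omega, hfeq⟩
      · have h' : (B : ℕ) < (A : ℕ) :=
          lt_of_le_of_ne h (fun heq => hne (Fin.ext heq.symm))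
        exact ⟨B, A, h', by omega, hfeq.symm⟩
    obtain ⟨p1, c1, p2, c2, hw1, hc1, hw2, h2m, h20, hsum⟩ :=
      splice σ0 x ε hw hab hbm hpab
    obtain ⟨m', p', c', hm', hw', h0', hm'', hle⟩ :=
      IH (m - (b - a)) (by omega) p2 c2 hw2
    refine ⟨m', p', c', hm', hw', by rw [h0', h20], by rw [hm'', h2m], ?_⟩
    have := hnn (b - a) p1 c1 hw1 hc1
    rw [hsum]
    linarith

lemma exists_walk (hconn : Γ.Connected) (hE : Nonempty Γ.edgeSet) (u v : V) :
    ∃ m p c, IsWalk Γ m p c ∧ p 0 = u ∧ p m = v := by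
  obtain ⟨w⟩ := hconn u v
  induction w with
  | @nil u0 =>
    exact ⟨0, fun _ => u0, fun _ => hE.some, fun s hs => absurd hs (by omega), rfl, rfl⟩
  | @cons u' v' w' hadj q ih =>
    obtain ⟨m, p, c, hwk, hp0, hpm⟩ := ih
    refine ⟨m + 1, fun s => if s = 0 then u' else p (s - 1),
      fun s => if s = 0 then ⟨s(u', v'), Γ.mem_edgeSet.mpr hadj⟩ else c (s - 1),
      ?_, by simp, ?_⟩
    · intro s hs
      rcases Nat.eq_zero_or_pos s with rfl | hs0
      · simp [hp0]
      · have h0 : ¬ s = 0 := by omega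
        have h1 : ¬ s + 1 = 0 := by omega
        simp only [if_neg h0, if_neg h1]
        have h1' : s - 1 + 1 = s := by omega
        have h2 : s + 1 - 1 = s := by omega
        have hthis := hwk (s - 1) (by omega)
        rw [h1'] at hthis
        rw [h2]
        exact hthis
    · have h1 : ¬ m + 1 = 0 := by omega
      simp only [if_neg h1]
      have h2 : m + 1 - 1 = m := by omega
      rw [h2]
      exact hpm
lemma backward [Fintype V] (hconn : Γ.Connected) (σ0 : Orient Γ)
    (hE : Nonempty Γ.edgeSet) (x : Γ.edgeSet → ℝ) (hcyc : CycIneq σ0 x) :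
    ∃ y : V → ℝ, ∀ e, x e - (y (σ0.head e) - y (σ0.tail e)) ∈ Set.Ico (0:ℝ) 1 := by
  classical
  obtain ⟨ε, hε0, hε1, hnn⟩ := exists_eps σ0 x hcyc
  obtain ⟨e0⟩ := hE
  set r : V := σ0.head e0 with hr
  set N : ℕ := Fintype.card V with hN
  -- the set of weights of walks from r to v of length ≤ N
  set WS : V → Set ℝ := fun v => {w | ∃ m p c, m ≤ N ∧ IsWalk Γ m p c ∧ p 0 = r ∧
    p m = v ∧ w = ∑ s ∈ Finset.range m, wt σ0 x ε p c s} with hWS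
  have hfin : ∀ v, (WS v).Finite := by
    intro v
    apply Set.Finite.subset (Set.finite_range
      (fun t : Fin (N + 1) × (Fin (N + 1) → V) × (Fin (N + 1) → Γ.edgeSet) =>
        ∑ s ∈ Finset.range (t.1 : ℕ), wt σ0 x ε (dec N t.2.1) (dec N t.2.2) s))
    rintro w ⟨m, p, c, hm, hw, hp0, hpm, rfl⟩
    refine ⟨⟨⟨m, by omega⟩, fun j => p (j : ℕ), fun j => c (j : ℕ)⟩, ?_⟩
    apply Finset.sum_congr rfl
    intro s hs
    rw [Finset.mem_range] at hs
    simp only [wt]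
    rw [dec_eq N p (by omega : s + 1 ≤ N), dec_eq N c (by omega : s ≤ N)]
  have hne : ∀ v, (WS v).Nonempty := by
    intro v
    obtain ⟨m, p, c, hw, hp0, hpm⟩ := exists_walk hconn ⟨e0⟩ r v
    obtain ⟨m', p', c', hm', hw', h0', hm'', _⟩ := shorten σ0 x ε hnn m p c hw
    exact ⟨_, m', p', c', by omega, hw', h0'.trans hp0, hm''.trans hpm, rfl⟩
  set d : V → ℝ := fun v => sInf (WS v) with hd
  have hd_mem : ∀ v, d v ∈ WS v := fun v => (hne v).csInf_mem (hfin v)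
  have hd_le : ∀ v w, w ∈ WS v → d v ≤ w := fun v w hw =>
    csInf_le (hfin v).bddBelow hw
  -- triangle inequality along one arc
  have tri : ∀ (e : Γ.edgeSet) (u v : V), (e : Sym2 V) = s(u, v) →
      d v ≤ d u + (if σ0.head e = v then x e else 1 - x e - ε) := by
    intro e u v hev
    obtain ⟨m, p, c, hmN, hw, hp0, hpm, hsum⟩ := hd_mem u
    obtain ⟨m', p', c', hm'N, hw', hp'0, hp'm, hle⟩ := shorten σ0 x ε hnn m p c hw
    set p2 : ℕ → V := fun s => if s = m' + 1 then v else p' s with hp2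
    set c2 : ℕ → Γ.edgeSet := fun s => if s = m' then e else c' s with hc2
    have hw2 : IsWalk Γ (m' + 1) p2 c2 := by
      intro s hs
      rcases Nat.lt_or_ge s m' with h | h
      · simp only [hp2, hc2, if_neg (by omega : ¬ s = m'),
          if_neg (by omega : ¬ s = m' + 1), if_neg (by omega : ¬ s + 1 = m' + 1)]
        exact hw' s h
      · have hsm : s = m' := by omega
        subst hsm
        simp only [hp2, hc2, if_pos rfl, if_neg (by omega : ¬ s = s + 1), hev]
        rw [hp'm, hpm]
    have hmem : (∑ s ∈ Finset.range (m' + 1), wt σ0 x ε p2 c2 s) ∈ WS v := by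
      refine ⟨m' + 1, p2, c2, by omega, hw2, ?_, ?_, rfl⟩
      · simp only [hp2, if_neg (by omega : ¬ (0:ℕ) = m' + 1)]
        rw [hp'0, hp0]
      · simp only [hp2, if_pos rfl]
    have hsplit : ∑ s ∈ Finset.range (m' + 1), wt σ0 x ε p2 c2 s
        = (∑ s ∈ Finset.range m', wt σ0 x ε p' c' s)
          + (if σ0.head e = v then x e else 1 - x e - ε) := by
      rw [Finset.sum_range_succ]
      congr 1
      · apply Finset.sum_congr rfl
        intro s hs
        rw [Finset.mem_range] at hs
        simp only [wt, hp2, hc2, if_neg (by omega : ¬ s = m'),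
          if_neg (by omega : ¬ s + 1 = m' + 1)]
      · simp only [wt, hp2, hc2, if_pos rfl]
    have h1 := hd_le v _ hmem
    rw [hsplit] at h1
    rw [hsum]
    linarith
  refine ⟨d, ?_⟩
  intro e
  have hcons := σ0.consistent e
  have hnet : σ0.head e ≠ σ0.tail e := head_ne_tail σ0 e
  have h1 : d (σ0.head e) ≤ d (σ0.tail e) + x e := by
    have := tri e (σ0.tail e) (σ0.head e) hcons.symm
    rwa [if_pos rfl] at this
  have h2 : d (σ0.tail e) ≤ d (σ0.head e) + (1 - x e - ε) := by
    have := tri e (σ0.head e) (σ0.tail e) (by rw [← hcons, Sym2.eq_swap])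
    rwa [if_neg hnet] at this
  constructor
  · simp only [sub_nonneg]
    linarith
  · linarith

lemma sum_cycle {M : Type*} [AddCommMonoid M] (g : ℕ → M) {ℓ : ℕ} (hℓ : 0 < ℓ) :
    ∑ s ∈ Finset.range ℓ, g ((s + 1) % ℓ) = ∑ s ∈ Finset.range ℓ, g s := by
  apply Finset.sum_nbij' (fun s => (s + 1) % ℓ) (fun s => (s + (ℓ - 1)) % ℓ)
  · intro a ha
    rw [Finset.mem_range] at ha ⊢
    exact Nat.mod_lt _ hℓ
  · intro a ha
    rw [Finset.mem_range] at ha ⊢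
    exact Nat.mod_lt _ hℓ
  · intro a ha
    rw [Finset.mem_range] at ha
    show ((a + 1) % ℓ + (ℓ - 1)) % ℓ = a
    rw [Nat.mod_add_mod]
    have h1 : a + 1 + (ℓ - 1) = a + ℓ := by omega
    rw [h1, Nat.add_mod_right, Nat.mod_eq_of_lt ha]
  · intro a ha
    rw [Finset.mem_range] at ha
    show ((a + (ℓ - 1)) % ℓ + 1) % ℓ = a
    rw [Nat.mod_add_mod]
    have h1 : a + (ℓ - 1) + 1 = a + ℓ := by omega
    rw [h1, Nat.add_mod_right, Nat.mod_eq_of_lt ha]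
  · intro a _
    rfl

lemma forward [Fintype V] (σ0 : Orient Γ) (hacyc : OAcyclic σ0) (x : Γ.edgeSet → ℝ)
    (y : V → ℝ) (hy : ∀ e, x e - (y (σ0.head e) - y (σ0.tail e)) ∈ Set.Ico (0:ℝ) 1) :
    CycIneq σ0 x := by
  intro ℓ i c h3 hinj hedge
  have hℓ : 0 < ℓ := by omega
  have hmodlt : ∀ s, s < ℓ → (s + 1) % ℓ < ℓ := fun s _ => Nat.mod_lt _ hℓ
  have hmodne : ∀ s < ℓ, s ≠ (s + 1) % ℓ := by
    intro s hs
    rcases Nat.lt_or_ge (s + 1) ℓ with h | h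
    · rw [Nat.mod_eq_of_lt h]; omega
    · have : s + 1 = ℓ := by omega
      rw [this, Nat.mod_self]; omega
  have hnexts : ∀ s < ℓ, i s ≠ i ((s + 1) % ℓ) := fun s hs => edge_ne (hedge s hs)
  have hdich : ∀ s < ℓ, (σ0.head (c s) = i ((s + 1) % ℓ) ∧ σ0.tail (c s) = i s) ∨
      (σ0.head (c s) = i s ∧ σ0.tail (c s) = i ((s + 1) % ℓ)) :=
    fun s hs => head_or σ0 (hedge s hs)
  set F1 := (Finset.range ℓ).filter (fun s => σ0.head (c s) = i ((s + 1) % ℓ)) with hF1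
  set F2 := (Finset.range ℓ).filter (fun s => σ0.head (c s) = i s) with hF2
  -- F1 is nonempty (otherwise a reversed directed cycle)
  have hF1ne : F1.Nonempty := by
    rw [Finset.filter_nonempty_iff]
    by_contra hF
    push_neg at hF
    have hstep : ∀ s < ℓ, dstep σ0 (i ((s + 1) % ℓ)) (i s) := by
      intro s hs
      rcases hdich s hs with ⟨h1, _⟩ | ⟨h1, h2⟩
      · exact absurd h1 (hF s (Finset.mem_range.mpr hs))
      · exact ⟨c s, h2, h1⟩
    have chain : ∀ s, 1 ≤ s → s ≤ ℓ → Relation.TransGen (dstep σ0) (i (s % ℓ)) (i 0) := by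
      intro s
      induction s with
      | zero => omega
      | succ t ih =>
        intro _ h2
        rcases Nat.eq_zero_or_pos t with rfl | ht
        · exact Relation.TransGen.single (hstep 0 (by omega))
        · have hs : t < ℓ := by omega
          have hstept := hstep t hs
          have ih' := ih (by omega) (by omega)
          rw [Nat.mod_eq_of_lt hs] at ih'
          exact Relation.TransGen.head hstept ih'
    have hfin := chain ℓ (by omega) le_rfl
    rw [Nat.mod_self] at hfin
    exact hacyc (i 0) hfin
  -- F2 is nonempty (otherwise a directed cycle)
  have hF2ne : F2.Nonempty := by
    rw [Finset.filter_nonempty_iff]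
    by_contra hF
    push_neg at hF
    have hstep : ∀ s < ℓ, dstep σ0 (i s) (i ((s + 1) % ℓ)) := by
      intro s hs
      rcases hdich s hs with ⟨h1, h2⟩ | ⟨h1, _⟩
      · exact ⟨c s, h2, h1⟩
      · exact absurd h1 (hF s (Finset.mem_range.mpr hs))
    have chain : ∀ s, 1 ≤ s → s ≤ ℓ → Relation.TransGen (dstep σ0) (i 0) (i (s % ℓ)) := by
      intro s
      induction s with
      | zero => omega
      | succ t ih =>
        intro _ h2
        rcases Nat.eq_zero_or_pos t with rfl | ht
        · exact Relation.TransGen.single (by simpa using hstep 0 (by omega))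
        · have hs : t < ℓ := by omega
          have hstept := hstep t hs
          have ih' := ih (by omega) (by omega)
          rw [Nat.mod_eq_of_lt hs] at ih'
          exact Relation.TransGen.tail ih' hstept
    have hfin := chain ℓ (by omega) le_rfl
    rw [Nat.mod_self] at hfin
    exact hacyc (i 0) hfin
  -- the z-values
  set z : Γ.edgeSet → ℝ := fun e => x e - (y (σ0.head e) - y (σ0.tail e)) with hz
  have hz0 : ∀ e, 0 ≤ z e := fun e => (hy e).1
  have hz1 : ∀ e, z e < 1 := fun e => (hy e).2
  set g : ℕ → ℝ := fun s => y (i ((s + 1) % ℓ)) - y (i s) with hg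
  -- rewrite x-sums via z-sums and the telescoping part
  have e1 : ∑ s ∈ F1, x (c s) = (∑ s ∈ F1, z (c s)) + ∑ s ∈ F1, g s := by
    rw [← Finset.sum_add_distrib]
    apply Finset.sum_congr rfl
    intro s hs
    rw [hF1, Finset.mem_filter, Finset.mem_range] at hs
    rcases hdich s hs.1 with ⟨h1, h2⟩ | ⟨h1, h2⟩
    · simp only [hz, hg, h1, h2]
      ring
    · exact absurd (h1.symm.trans hs.2) (hnexts s hs.1)
  have e2 : ∑ s ∈ F2, x (c s) = (∑ s ∈ F2, z (c s)) - ∑ s ∈ F2, g s := by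
    rw [← Finset.sum_sub_distrib]
    apply Finset.sum_congr rfl
    intro s hs
    rw [hF2, Finset.mem_filter, Finset.mem_range] at hs
    rcases hdich s hs.1 with ⟨h1, h2⟩ | ⟨h1, h2⟩
    · exact absurd (h1.symm.trans hs.2) (Ne.symm (hnexts s hs.1))
    · simp only [hz, hg, h1, h2]
      ring
  have hcompl : F2 = (Finset.range ℓ).filter
      (fun s => ¬ σ0.head (c s) = i ((s + 1) % ℓ)) := by
    apply Finset.filter_congr
    intro s hs
    rw [Finset.mem_range] at hs
    constructor
    · intro hB hA
      exact (hnexts s hs) (hB.symm.trans hA)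
    · intro hA
      rcases hdich s hs with ⟨h1, _⟩ | ⟨h1, _⟩
      · exact absurd h1 hA
      · exact h1
  have hgsum : (∑ s ∈ F1, g s) + ∑ s ∈ F2, g s = 0 := by
    rw [hcompl, hF1, Finset.sum_filter_add_sum_filter_not]
    simp only [hg]
    rw [Finset.sum_sub_distrib, sum_cycle (fun s => y (i s)) hℓ]
    ring
  have hzb1 : ∑ s ∈ F1, z (c s) < F1.card := by
    have := Finset.sum_lt_sum_of_nonempty hF1ne (fun s _ => hz1 (c s))
    rw [Finset.sum_const, nsmul_eq_mul, mul_one] at this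
    exact this
  have hzb2 : ∑ s ∈ F2, z (c s) < F2.card := by
    have := Finset.sum_lt_sum_of_nonempty hF2ne (fun s _ => hz1 (c s))
    rw [Finset.sum_const, nsmul_eq_mul, mul_one] at this
    exact this
  have hza1 : 0 ≤ ∑ s ∈ F1, z (c s) := Finset.sum_nonneg (fun s _ => hz0 (c s))
  have hza2 : 0 ≤ ∑ s ∈ F2, z (c s) := Finset.sum_nonneg (fun s _ => hz0 (c s))
  constructor
  · rw [e1, e2]; linarith
  · rw [e1, e2]; linarith

end ConicAux

/-- Description of the conic region `W(B)` for the toric ring of a balanced signed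
poset of type `A` with Hasse diagram `(Γ, σ0)`. -/
theorem conic_region_of_balanced_signed_poset
    {V : Type*} [Fintype V] [DecidableEq V] (Γ : SimpleGraph V)
    (hconn : Γ.Connected)
    (σ0 : Orient Γ) (hacyc : OAcyclic σ0)
    (hhasse : ∀ e, ¬ ∃ w, dstep σ0 (σ0.tail e) w ∧
      Relation.TransGen (dstep σ0) w (σ0.head e))
    (x : Γ.edgeSet → ℝ) :
    (∃ y : V → ℝ, ∀ e, x e - ∑ v, (incMat σ0 v e : ℝ) * y v ∈ Set.Ico (0:ℝ) 1) ↔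
    (∀ (ℓ : ℕ) (i : ℕ → V) (c : ℕ → Γ.edgeSet), 3 ≤ ℓ →
      (∀ s s', s < ℓ → s' < ℓ → i s = i s' → s = s') →
      (∀ s < ℓ, (c s : Sym2 V) = s(i s, i ((s + 1) % ℓ))) →
      (-((((Finset.range ℓ).filter fun s => σ0.head (c s) = i s).card : ℝ)) <
          (∑ s ∈ (Finset.range ℓ).filter (fun s => σ0.head (c s) = i ((s + 1) % ℓ)),
            x (c s)) -
          (∑ s ∈ (Finset.range ℓ).filter (fun s => σ0.head (c s) = i s), x (c s)) ∧
        (∑ s ∈ (Finset.range ℓ).filter (fun s => σ0.head (c s) = i ((s + 1) % ℓ)),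
            x (c s)) -
          (∑ s ∈ (Finset.range ℓ).filter (fun s => σ0.head (c s) = i s), x (c s)) <
          (((Finset.range ℓ).filter fun s => σ0.head (c s) = i ((s + 1) % ℓ)).card : ℝ))) := by
  by_cases hE : Nonempty Γ.edgeSet
  · constructor
    · rintro ⟨y, hy⟩
      have hy' : ∀ e, x e - (y (σ0.head e) - y (σ0.tail e)) ∈ Set.Ico (0:ℝ) 1 := by
        intro e
        have := hy e
        rwa [ConicAux.sum_inc] at this
      exact ConicAux.forward σ0 hacyc x y hy'
    · intro hcyc
      obtain ⟨y, hy⟩ := ConicAux.backward hconn σ0 hE x hcyc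
      refine ⟨y, fun e => ?_⟩
      rw [ConicAux.sum_inc]
      exact hy e
  · constructor
    · intro _ ℓ i c h3 hinj hedge
      exact absurd ⟨c 0⟩ hE
    · intro _
      exact ⟨0, fun e => absurd ⟨e⟩ hE⟩
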